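/- Let G̃ be a certified shortcut graph for strings x,y of length n: vertices {0,...,n}×{0,...,n}, all H and V edges of cost 1, plus shortcut edges e_{I,J} from (min I, min J) to (max I, max J) each with cost at least d_edit(x_I, y_J). Then the minimum cost of a path from (0,0) to (n,n) in G̃ is at least d_edit(x,y). -/

import Mathlib

open List

/-- Costs for the Levenshtein distance (as in the former `Mathlib.Data.List.EditDistance.Defs`). -/
structure Levenshtein.Cost (α β δ : Type*) where
  delete : α → δ
  insert : β → δ
  substitute : α → β → δ

/-- The default cost structure: unit costs, substitution of equal letters free. -/
def Levenshtein.defaultCost {α : Type*} [DecidableEq α] : Levenshtein.Cost α α ℕ :=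
  ⟨fun _ => 1, fun _ => 1, fun a b => if a = b then 0 else 1⟩

/-- Levenshtein distance, via its defining recursion (former Mathlib `levenshtein`, at `δ = ℕ`). -/
def levenshtein {α β : Type*} (C : Levenshtein.Cost α β ℕ) : List α → List β → ℕ
  | [], [] => 0
  | [], y :: ys => C.insert y + levenshtein C [] ys
  | x :: xs, [] => C.delete x + levenshtein C xs []
  | x :: xs, y :: ys =>
    min (C.delete x + levenshtein C xs (y :: ys))
      (min (C.insert y + levenshtein C (x :: xs) ys) (C.substitute x y + levenshtein C xs ys))

/-- Edit distance between two lists (Levenshtein distance with unit costs). -/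
def edist {α : Type*} [DecidableEq α] (x y : List α) : ℕ :=
  levenshtein Levenshtein.defaultCost x y

/-- The substring of `x` indexed by the interval `I = {I.1, ..., I.2}` minus its minimum,
i.e. the characters `x_{I.1+1}, ..., x_{I.2}` (1-indexed). -/
def sub {α : Type*} (x : List α) (I : ℕ × ℕ) : List α :=
  (x.drop I.1).take (I.2 - I.1)

@[simp] theorem levenshtein_nil_nil {α β : Type*} (C : Levenshtein.Cost α β ℕ) :
    levenshtein C [] [] = 0 := by rw [levenshtein]

@[simp] theorem levenshtein_nil_cons {α β : Type*} (C : Levenshtein.Cost α β ℕ) (y : β) (ys : List β) :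
    levenshtein C [] (y :: ys) = C.insert y + levenshtein C [] ys := by rw [levenshtein]

@[simp] theorem levenshtein_cons_nil {α β : Type*} (C : Levenshtein.Cost α β ℕ) (x : α) (xs : List α) :
    levenshtein C (x :: xs) [] = C.delete x + levenshtein C xs [] := by rw [levenshtein]

@[simp] theorem levenshtein_cons_cons {α β : Type*} (C : Levenshtein.Cost α β ℕ) (x : α) (xs : List α)
    (y : β) (ys : List β) :
    levenshtein C (x :: xs) (y :: ys) =
      min (C.delete x + levenshtein C xs (y :: ys))
        (min (C.insert y + levenshtein C (x :: xs) ys) (C.substitute x y + levenshtein C xs ys)) := by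
  rw [levenshtein]

@[simp] theorem Levenshtein.defaultCost_delete {α : Type*} [DecidableEq α] (a : α) :
    (Levenshtein.defaultCost (α := α)).delete a = 1 := rfl

@[simp] theorem Levenshtein.defaultCost_insert {α : Type*} [DecidableEq α] (a : α) :
    (Levenshtein.defaultCost (α := α)).insert a = 1 := rfl

@[simp] theorem Levenshtein.defaultCost_substitute {α : Type*} [DecidableEq α] (a b : α) :
    (Levenshtein.defaultCost (α := α)).substitute a b = if a = b then 0 else 1 := rfl

lemma edist_del {α : Type*} [DecidableEq α] (a : α) (s t : List α) :
    _root_.edist (a :: s) t ≤ 1 + _root_.edist s t := by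
  cases t with
  | nil => simp [_root_.edist]
  | cons b t =>
    simp only [_root_.edist, levenshtein_cons_cons]
    exact le_trans (min_le_left _ _) (by simp)

lemma edist_ins {α : Type*} [DecidableEq α] (b : α) (s t : List α) :
    _root_.edist s (b :: t) ≤ 1 + _root_.edist s t := by
  cases s with
  | nil => simp [_root_.edist]
  | cons a s =>
    simp only [_root_.edist, levenshtein_cons_cons]
    exact le_trans (le_trans (min_le_right _ _) (min_le_left _ _)) (by simp)

lemma edist_nil_left {α : Type*} [DecidableEq α] (t : List α) :
    _root_.edist [] t = t.length := by
  induction t with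
  | nil => simp [_root_.edist]
  | cons b t ih => simp only [_root_.edist, levenshtein_nil_cons] at ih ⊢; simp; omega

lemma edist_nil_right {α : Type*} [DecidableEq α] (s : List α) :
    _root_.edist s [] = s.length := by
  induction s with
  | nil => simp [_root_.edist]
  | cons a s ih => simp only [_root_.edist, levenshtein_cons_nil] at ih ⊢; simp; omega

lemma edist_subadd {α : Type*} [DecidableEq α] (s1 s2 t1 t2 : List α) :
    _root_.edist (s1 ++ s2) (t1 ++ t2) ≤ _root_.edist s1 t1 + _root_.edist s2 t2 := by
  induction s1 generalizing t1 with
  | nil =>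
    induction t1 with
    | nil => simp
    | cons b t1 ih =>
      simp only [nil_append, cons_append] at ih ⊢
      have h := edist_ins b s2 (t1 ++ t2)
      have h2 := edist_nil_left (α := α) (b :: t1)
      have h3 := edist_nil_left (α := α) t1
      simp at h2 h3
      omega
  | cons a s1 ihs =>
    induction t1 with
    | nil =>
      simp only [cons_append, nil_append]
      have h := edist_del a (s1 ++ s2) t2
      have h2 := ihs ([] : List α)
      simp only [nil_append, append_nil] at h2
      have h3 := edist_nil_right (α := α) (a :: s1)
      have h4 := edist_nil_right (α := α) s1
      simp at h3 h4
      omega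
    | cons b t1 iht =>
      simp only [cons_append] at iht ⊢
      have h1 := edist_del a (s1 ++ s2) (b :: (t1 ++ t2))
      have h2 := edist_ins b (a :: (s1 ++ s2)) (t1 ++ t2)
      have h3 : _root_.edist (a :: (s1 ++ s2)) (b :: (t1 ++ t2)) ≤
          (if a = b then 0 else 1) + _root_.edist (s1 ++ s2) (t1 ++ t2) := by
        simp only [_root_.edist, levenshtein_cons_cons]
        exact le_trans (le_trans (min_le_right _ _) (min_le_right _ _)) (by simp)
      have e1 := ihs (b :: t1)
      simp only [cons_append] at e1
      have e3 := ihs t1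
      have hmin : _root_.edist (a :: s1) (b :: t1) =
          min (1 + _root_.edist s1 (b :: t1))
            (min (1 + _root_.edist (a :: s1) t1)
              ((if a = b then 0 else 1) + _root_.edist s1 t1)) := by
        simp only [_root_.edist, levenshtein_cons_cons]
        simp
      rcases eq_or_ne a b with hab | hab
      · subst hab
        simp only [ite_true] at h3 hmin
        omega
      · rw [if_neg hab] at h3 hmin
        omega

lemma edist_drop_H {α : Type*} [DecidableEq α] (x y : List α) (a b : ℕ) :
    _root_.edist (x.drop a) (y.drop b) ≤ 1 + _root_.edist (x.drop (a + 1)) (y.drop b) := by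
  by_cases h : a < x.length
  · rw [List.drop_eq_getElem_cons h]
    exact edist_del _ _ _
  · have h1 : x.drop a = [] := List.drop_eq_nil_of_le (by omega)
    have h2 : x.drop (a + 1) = [] := List.drop_eq_nil_of_le (by omega)
    rw [h1, h2]
    omega

lemma edist_drop_V {α : Type*} [DecidableEq α] (x y : List α) (a b : ℕ) :
    _root_.edist (x.drop a) (y.drop b) ≤ 1 + _root_.edist (x.drop a) (y.drop (b + 1)) := by
  by_cases h : b < y.length
  · rw [List.drop_eq_getElem_cons h]
    exact edist_ins _ _ _
  · have h1 : y.drop b = [] := List.drop_eq_nil_of_le (by omega)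
    have h2 : y.drop (b + 1) = [] := List.drop_eq_nil_of_le (by omega)
    rw [h1, h2]
    omega

lemma edist_drop_cut {α : Type*} [DecidableEq α] (x y : List α) (a a' b b' : ℕ)
    (ha : a ≤ a') (hb : b ≤ b') :
    _root_.edist (x.drop a) (y.drop b) ≤
      _root_.edist ((x.drop a).take (a' - a)) ((y.drop b).take (b' - b)) +
        _root_.edist (x.drop a') (y.drop b') := by
  have h1 : (x.drop a).drop (a' - a) = x.drop a' := by
    rw [List.drop_drop]; congr 1; omega
  have h2 : (y.drop b).drop (b' - b) = y.drop b' := by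
    rw [List.drop_drop]; congr 1; omega
  have hx : (x.drop a).take (a' - a) ++ x.drop a' = x.drop a := by
    rw [← h1, List.take_append_drop]
  have hy : (y.drop b).take (b' - b) ++ y.drop b' = y.drop b := by
    rw [← h2, List.take_append_drop]
  have h := edist_subadd ((x.drop a).take (a' - a)) (x.drop a')
    ((y.drop b).take (b' - b)) (y.drop b')
  rw [hx, hy] at h
  exact h

/-- in a certified shortcut graph (H and V edges of cost 1 plus shortcut
edges e_{I,J} whose cost is at least d_edit(x_I, y_J)), every path from (0,0) to (n,n)
has cost at least d_edit(x,y). A path is given as a list of moves (p, q, c). -/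
theorem stmt13 {α : Type*} [DecidableEq α] (n : ℕ) (x y : List α)
    (hx : x.length = n) (hy : y.length = n)
    (E : List ((ℕ × ℕ) × (ℕ × ℕ) × ℕ))
    (hE : ∀ e ∈ E, e.1.1 < e.1.2 ∧ e.2.1.1 < e.2.1.2 ∧
      edist (sub x e.1) (sub y e.2.1) ≤ e.2.2)
    (moves : List ((ℕ × ℕ) × (ℕ × ℕ) × ℕ))
    (hvalid : ∀ mv ∈ moves,
      (mv.2.1 = (mv.1.1 + 1, mv.1.2) ∧ mv.2.2 = 1) ∨
      (mv.2.1 = (mv.1.1, mv.1.2 + 1) ∧ mv.2.2 = 1) ∨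
      (∃ e ∈ E, mv.1 = (e.1.1, e.2.1.1) ∧ mv.2.1 = (e.1.2, e.2.1.2) ∧ mv.2.2 = e.2.2))
    (hchain : moves.Chain' (fun a b => a.2.1 = b.1))
    (hstart : moves.head?.map (·.1) = some (0, 0))
    (hend : moves.getLast?.map (·.2.1) = some (n, n)) :
    edist x y ≤ (moves.map (·.2.2)).sum := by
  have key : ∀ (ms : List ((ℕ × ℕ) × (ℕ × ℕ) × ℕ)) (p : ℕ × ℕ),
      (∀ mv ∈ ms, (mv.2.1 = (mv.1.1 + 1, mv.1.2) ∧ mv.2.2 = 1) ∨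
        (mv.2.1 = (mv.1.1, mv.1.2 + 1) ∧ mv.2.2 = 1) ∨
        (∃ e ∈ E, mv.1 = (e.1.1, e.2.1.1) ∧ mv.2.1 = (e.1.2, e.2.1.2) ∧ mv.2.2 = e.2.2)) →
      ms.Chain' (fun a b => a.2.1 = b.1) →
      (∀ m ∈ ms.head?, m.1 = p) →
      (ms.getLast?.map (·.2.1)).getD p = (n, n) →
      edist (x.drop p.1) (y.drop p.2) ≤ (ms.map (·.2.2)).sum := by
    intro ms
    induction ms with
    | nil =>
      intro p _ _ _ hlast
      simp only [getLast?_nil, Option.map_none, Option.getD_none] at hlast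
      subst hlast
      rw [List.drop_eq_nil_of_le (le_of_eq hx), List.drop_eq_nil_of_le (le_of_eq hy)]
      simp [edist_nil_left]
    | cons m rest ih =>
      intro p hv hc hh hlast
      have hp : m.1 = p := hh m rfl
      replace hc := List.isChain_cons.mp hc
      have hrest_last : (rest.getLast?.map (·.2.1)).getD m.2.1 = (n, n) := by
        cases rest with
        | nil =>
          simpa using hlast
        | cons r rs =>
          rw [List.getLast?_cons_cons] at hlast
          exact hlast
      have ihr := ih m.2.1 (fun mv h => hv mv (mem_cons_of_mem _ h)) hc.2
        (fun mm hm => (hc.1 mm hm).symm) hrest_last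
      have hsum : ((m :: rest).map (·.2.2)).sum = m.2.2 + (rest.map (·.2.2)).sum := by
        simp
      rw [hsum]
      have hp1 : p.1 = m.1.1 := by rw [← hp]
      have hp2 : p.2 = m.1.2 := by rw [← hp]
      rcases hv m (mem_cons_self) with ⟨hq, hc1⟩ | ⟨hq, hc1⟩ | ⟨e, heE, hq1, hq2, hc1⟩
      · -- H move
        have hstep := edist_drop_H x y p.1 p.2
        rw [hq] at ihr
        have ihr' : _root_.edist (x.drop (p.1 + 1)) (y.drop p.2) ≤
            (rest.map (·.2.2)).sum := by
          rw [hp1, hp2]; exact ihr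
        rw [hc1]
        omega
      · -- V move
        have hstep := edist_drop_V x y p.1 p.2
        rw [hq] at ihr
        have ihr' : _root_.edist (x.drop p.1) (y.drop (p.2 + 1)) ≤
            (rest.map (·.2.2)).sum := by
          rw [hp1, hp2]; exact ihr
        rw [hc1]
        omega
      · -- shortcut
        obtain ⟨he1, he2, he3⟩ := hE e heE
        unfold sub at he3
        have hcut := edist_drop_cut x y e.1.1 e.1.2 e.2.1.1 e.2.1.2 he1.le he2.le
        rw [hq2] at ihr
        have ihr' : _root_.edist (x.drop e.1.2) (y.drop e.2.1.2) ≤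
            (rest.map (·.2.2)).sum := ihr
        have hq1' : p.1 = e.1.1 := by rw [← hp, hq1]
        have hq2' : p.2 = e.2.1.1 := by rw [← hp, hq1]
        rw [hq1', hq2', hc1]
        omega
  have hh : ∀ m ∈ moves.head?, m.1 = ((0 : ℕ), (0 : ℕ)) := by
    intro m hm
    obtain ⟨m', hm', he'⟩ := Option.map_eq_some_iff.mp hstart
    rw [hm'] at hm
    simp only [Option.mem_some_iff] at hm
    rw [← hm]
    exact he'
  have hl : (moves.getLast?.map (·.2.1)).getD ((0 : ℕ), (0 : ℕ)) = (n, n) := by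
    cases hml : moves.getLast? with
    | none => rw [hml] at hend; simp at hend
    | some m' =>
      rw [hml] at hend
      simp at hend ⊢
      exact hend
  have h := key moves (0, 0) hvalid hchain hh hl
  simpa using h
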